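/- Any (k−1)-(n,k,λ) design D, viewed as a set of vertices of the Johnson graph J(n,k), is a completely regular code with covering radius 1: there exist constants β₀ and γ₁ ≥ 1 such that every block of D has exactly β₀ neighbors outside D and every k-subset not in D has exactly γ₁ neighbors in D. -/

import Mathlib

open Finset

private lemma ncard_eq_filter {α} [Fintype α] (p : α → Prop) [DecidablePred p] :
    {a | p a}.ncard = (univ.filter p).card := by
  rw [← Set.ncard_coe_finset]; congr 1; ext a; simp

private lemma fiber_iff {n k : ℕ} (hk : 1 ≤ k) {x s y : Finset (Fin n)}
    (hx : x.card = k) (hs : s ⊆ x) (hsc : s.card = k - 1) :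
    (y.card = k ∧ x ∩ y = s) ↔ (s ⊆ y ∧ y.card = k ∧ y ≠ x) := by
  constructor
  · rintro ⟨hy, rfl⟩
    refine ⟨inter_subset_right, hy, ?_⟩
    rintro rfl
    rw [inter_self] at hsc
    omega
  · rintro ⟨hsy, hy, hne⟩
    refine ⟨hy, ?_⟩
    have h1 : s ⊆ x ∩ y := subset_inter hs hsy
    have h2 : (x ∩ y).card ≠ k := by
      intro h
      have hxy : x ∩ y = x := eq_of_subset_of_card_le inter_subset_left (by omega)
      have : x ⊆ y := by rw [← hxy]; exact inter_subset_right
      exact hne (eq_of_subset_of_card_le this (by omega)).symm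
    have h3 : (x ∩ y).card ≤ x.card := card_le_card inter_subset_left
    have h4 : s.card ≤ (x ∩ y).card := card_le_card h1
    exact (eq_of_subset_of_card_le h1 (by omega)).symm

private lemma card_supersets {n k : ℕ} (hk : 1 ≤ k) (hkn : k + 1 ≤ n) {s : Finset (Fin n)}
    (hsc : s.card = k - 1) :
    (univ.filter (fun y => s ⊆ y ∧ y.card = k)).card = n - k + 1 := by
  have himg : univ.filter (fun y => s ⊆ y ∧ y.card = k)
      = sᶜ.image (fun b => insert b s) := by
    ext y
    simp only [mem_filter, mem_univ, true_and, mem_image, mem_compl]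
    constructor
    · rintro ⟨hsy, hy⟩
      have hc : (y \ s).card = 1 := by rw [card_sdiff_of_subset hsy]; omega
      obtain ⟨b, hb⟩ := card_eq_one.mp hc
      have hbmem : b ∈ y \ s := hb ▸ mem_singleton_self b
      rw [mem_sdiff] at hbmem
      refine ⟨b, hbmem.2, ?_⟩
      have hsub : insert b s ⊆ y := insert_subset hbmem.1 hsy
      exact eq_of_subset_of_card_le hsub
        (by rw [card_insert_of_notMem hbmem.2]; omega)
    · rintro ⟨b, hb, rfl⟩
      exact ⟨subset_insert _ _, by rw [card_insert_of_notMem hb]; omega⟩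
  rw [himg, card_image_of_injOn, card_compl, Fintype.card_fin, hsc]
  · omega
  · intro a ha b hb hab
    simp only [coe_compl, Set.mem_compl_iff, mem_coe] at ha hb
    have hab' : insert a s = insert b s := hab
    have : a ∈ insert b s := hab' ▸ mem_insert_self a s
    rcases mem_insert.mp this with h | h
    · exact h
    · exact absurd h ha

private lemma partition_card {n k : ℕ} {x : Finset (Fin n)}
    (P : Finset (Fin n) → Prop) [DecidablePred P] :
    (univ.filter (fun y => y.card = k ∧ (x ∩ y).card = k - 1 ∧ P y)).card
      = ∑ s ∈ x.powersetCard (k - 1),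
          (univ.filter (fun y => y.card = k ∧ x ∩ y = s ∧ P y)).card := by
  rw [← card_biUnion]
  · congr 1
    ext y
    simp only [mem_biUnion, mem_powersetCard, mem_filter, mem_univ, true_and]
    constructor
    · rintro ⟨hy, hc, hP⟩
      exact ⟨x ∩ y, ⟨inter_subset_left, hc⟩, hy, rfl, hP⟩
    · rintro ⟨s, ⟨hs, hsc⟩, hy, rfl, hP⟩
      exact ⟨hy, hsc, hP⟩
  · intro s hs t ht hst
    rw [Function.onFun, Finset.disjoint_left]
    intro y hy1 hy2
    simp only [mem_filter] at hy1 hy2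
    exact hst (hy1.2.2.1 ▸ hy2.2.2.1)

/-- Any `(k−1)-(n,k,λ)` design `D`, viewed as a set of vertices of the
Johnson graph `J(n,k)`, is a completely regular code with covering radius 1: there
exist constants `β₀` and `γ₁ ≥ 1` such that every block of `D` has exactly `β₀`
neighbors outside `D` and every `k`-subset not in `D` has exactly `γ₁` neighbors
in `D`. -/
theorem stmt16 (n k lam : ℕ) (hk : 1 ≤ k) (hkn : k + 1 ≤ n) (hlam : 1 ≤ lam)
    (D : Set (Finset (Fin n)))
    (hDk : ∀ B ∈ D, B.card = k)
    (hdes : ∀ s : Finset (Fin n), s.card = k - 1 → {B ∈ D | s ⊆ B}.ncard = lam) :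
    ∃ β₀ γ₁ : ℕ, 1 ≤ γ₁ ∧
      (∀ x ∈ D, {y : Finset (Fin n) | y.card = k ∧ (x ∩ y).card = k - 1 ∧
        y ∉ D}.ncard = β₀) ∧
      (∀ x : Finset (Fin n), x.card = k → x ∉ D →
        {y ∈ D | (x ∩ y).card = k - 1}.ncard = γ₁) := by
  classical
  have hchoose : k.choose (k - 1) = k := by
    rw [← Nat.choose_symm (Nat.sub_le k 1), Nat.sub_sub_self hk, Nat.choose_one_right]
  have hdes' : ∀ s : Finset (Fin n), s.card = k - 1 →
      (univ.filter (fun B => B ∈ D ∧ s ⊆ B)).card = lam := by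
    intro s hs
    rw [← ncard_eq_filter]
    exact hdes s hs
  refine ⟨k * ((n - k + 1) - lam), k * lam, by
      simpa using Nat.mul_le_mul hk hlam, ?_, ?_⟩
  · intro x hxD
    have hx : x.card = k := hDk x hxD
    rw [ncard_eq_filter, partition_card (fun y => y ∉ D)]
    rw [Finset.sum_congr rfl (fun s hs => ?_), Finset.sum_const, card_powersetCard,
      hx, hchoose, smul_eq_mul]
    -- per-fiber count
    rw [mem_powersetCard] at hs
    obtain ⟨hsx, hsc⟩ := hs
    have hfe : univ.filter (fun y => y.card = k ∧ x ∩ y = s ∧ y ∉ D)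
        = (univ.filter (fun y => s ⊆ y ∧ y.card = k)).filter (fun y => y ∉ D) := by
      ext y
      simp only [mem_filter, mem_univ, true_and]
      constructor
      · rintro ⟨hy, hxy, hyD⟩
        have := (fiber_iff hk hx hsx hsc).mp ⟨hy, hxy⟩
        exact ⟨⟨this.1, this.2.1⟩, hyD⟩
      · rintro ⟨⟨hsy, hy⟩, hyD⟩
        have hne : y ≠ x := fun h => hyD (h ▸ hxD)
        have := (fiber_iff hk hx hsx hsc).mpr ⟨hsy, hy, hne⟩
        exact ⟨this.1, this.2, hyD⟩
    rw [hfe]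
    have hsplit := Finset.card_filter_add_card_filter_not
      (s := univ.filter (fun y => s ⊆ y ∧ y.card = k)) (p := fun y => y ∈ D)
    have hin : ((univ.filter (fun y => s ⊆ y ∧ y.card = k)).filter (fun y => y ∈ D)).card
        = lam := by
      rw [← hdes' s hsc]
      congr 1
      ext y
      simp only [mem_filter, mem_univ, true_and]
      constructor
      · rintro ⟨⟨hsy, hy⟩, hyD⟩; exact ⟨hyD, hsy⟩
      · rintro ⟨hyD, hsy⟩; exact ⟨⟨hsy, hDk y hyD⟩, hyD⟩
    have htot := card_supersets hk hkn hsc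
    omega
  · intro x hx hxD
    have hset : {y | y ∈ D ∧ (x ∩ y).card = k - 1}
        = {y : Finset (Fin n) | y.card = k ∧ (x ∩ y).card = k - 1 ∧ y ∈ D} := by
      ext y
      simp only [Set.mem_setOf_eq]
      constructor
      · rintro ⟨hyD, hc⟩; exact ⟨hDk y hyD, hc, hyD⟩
      · rintro ⟨_, hc, hyD⟩; exact ⟨hyD, hc⟩
    show {y | y ∈ D ∧ (x ∩ y).card = k - 1}.ncard = k * lam
    rw [hset, ncard_eq_filter, partition_card (fun y => y ∈ D)]
    rw [Finset.sum_congr rfl (fun s hs => ?_), Finset.sum_const, card_powersetCard,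
      hx, hchoose, smul_eq_mul]
    rw [mem_powersetCard] at hs
    obtain ⟨hsx, hsc⟩ := hs
    rw [← hdes' s hsc]
    congr 1
    ext y
    simp only [mem_filter, mem_univ, true_and]
    constructor
    · rintro ⟨hy, hxy, hyD⟩
      exact ⟨hyD, hxy ▸ inter_subset_right⟩
    · rintro ⟨hyD, hsy⟩
      have hne : y ≠ x := fun h => hxD (h ▸ hyD)
      have := (fiber_iff hk hx hsx hsc).mpr ⟨hsy, hDk y hyD, hne⟩
      exact ⟨this.1, this.2, hyD⟩
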